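/- Let t₀ ∈ ℝ. There is no function y : ℝ → ℝ that is twice differentiable at every t ≥ t₀ and satisfies simultaneously: y(t) > 0 for all t ≥ t₀, y'(t₀) > 0, and y(t)·y''(t) ≥ (5/4)·(y'(t))² for all t ≥ t₀. -/

import Mathlib

/-- There is no function `y : ℝ → ℝ`, twice differentiable at each `t ≥ t₀`, with
`y > 0` on `[t₀,∞)`, `y'(t₀) > 0`, and `y·y'' ≥ (5/4)·(y')²` on `[t₀,∞)`. -/
theorem no_global_convex_blowup (t₀ : ℝ) :
    ¬ ∃ y : ℝ → ℝ,
      (∀ t, t₀ ≤ t → DifferentiableAt ℝ y t ∧ DifferentiableAt ℝ (deriv y) t) ∧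
      (∀ t, t₀ ≤ t → 0 < y t) ∧
      0 < deriv y t₀ ∧
      (∀ t, t₀ ≤ t → (5 / 4) * (deriv y t) ^ 2 ≤ y t * deriv (deriv y) t) := by
  rintro ⟨y, hdiff, hpos, hy'0, hineq⟩
  -- z = y^{-1/4}, Z' its derivative
  set z : ℝ → ℝ := fun t => y t ^ ((-1 : ℝ)/4) with hz
  set Z' : ℝ → ℝ := fun t => (-(1 : ℝ)/4) * (y t ^ ((-5 : ℝ)/4) * deriv y t) with hZ'
  have hzderiv : ∀ t, t₀ ≤ t → HasDerivAt z (Z' t) t := by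
    intro t ht
    have h1 : HasDerivAt y (deriv y t) t := (hdiff t ht).1.hasDerivAt
    have h2 := h1.rpow_const (p := (-1 : ℝ)/4) (Or.inl (ne_of_gt (hpos t ht)))
    have he : ((-1 : ℝ)/4 - 1) = (-5 : ℝ)/4 := by norm_num
    rw [he] at h2
    convert h2 using 1
    ring
  have hZ'deriv : ∀ t, t₀ ≤ t →
      HasDerivAt Z' ((-(1 : ℝ)/4) *
        (deriv y t * ((-5 : ℝ)/4) * y t ^ ((-5 : ℝ)/4 - 1) * deriv y t
          + y t ^ ((-5 : ℝ)/4) * deriv (deriv y) t)) t := by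
    intro t ht
    have h1 : HasDerivAt y (deriv y t) t := (hdiff t ht).1.hasDerivAt
    have h2 := h1.rpow_const (p := (-5 : ℝ)/4) (Or.inl (ne_of_gt (hpos t ht)))
    have h3 : HasDerivAt (deriv y) (deriv (deriv y) t) t := (hdiff t ht).2.hasDerivAt
    exact (h2.mul h3).const_mul _
  -- Z'' ≤ 0 on (t₀, ∞), hence Z' antitone on [t₀, ∞)
  have hZ'anti : AntitoneOn Z' (Set.Ici t₀) := by
    apply antitoneOn_of_deriv_nonpos (convex_Ici t₀)
    · intro t ht
      exact (hZ'deriv t ht).continuousAt.continuousWithinAt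
    · intro t ht
      rw [interior_Ici] at ht
      exact ((hZ'deriv t (le_of_lt ht)).differentiableAt).differentiableWithinAt
    · intro t ht
      rw [interior_Ici] at ht
      have ht' : t₀ ≤ t := le_of_lt ht
      rw [(hZ'deriv t ht').deriv]
      have hyt : 0 < y t := hpos t ht'
      have hsplit : y t ^ ((-5 : ℝ)/4) = y t ^ ((-5 : ℝ)/4 - 1) * y t := by
        rw [← Real.rpow_add_one (ne_of_gt hyt)]
        ring_nf
      have key : (-(1 : ℝ)/4) *
          (deriv y t * ((-5 : ℝ)/4) * y t ^ ((-5 : ℝ)/4 - 1) * deriv y t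
            + y t ^ ((-5 : ℝ)/4) * deriv (deriv y) t)
          = y t ^ ((-5 : ℝ)/4 - 1) *
            ((5/16) * (deriv y t) ^ 2 - (1/4) * (y t * deriv (deriv y) t)) := by
        rw [hsplit]; ring
      rw [key]
      apply mul_nonpos_of_nonneg_of_nonpos
      · exact le_of_lt (Real.rpow_pos_of_pos hyt _)
      · nlinarith [hineq t ht']
  -- w = z - Z'(t₀) * t is antitone on [t₀, ∞)
  set w : ℝ → ℝ := fun t => z t - Z' t₀ * t with hw
  have hwderiv : ∀ t, t₀ ≤ t → HasDerivAt w (Z' t - Z' t₀) t := by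
    intro t ht
    have := (hzderiv t ht).sub ((hasDerivAt_id t).const_mul (Z' t₀))
    exact this.congr_deriv (by ring)
  have hwanti : AntitoneOn w (Set.Ici t₀) := by
    apply antitoneOn_of_deriv_nonpos (convex_Ici t₀)
    · intro t ht
      exact (hwderiv t ht).continuousAt.continuousWithinAt
    · intro t ht
      rw [interior_Ici] at ht
      exact ((hwderiv t (le_of_lt ht)).differentiableAt).differentiableWithinAt
    · intro t ht
      rw [interior_Ici] at ht
      rw [(hwderiv t (le_of_lt ht)).deriv]
      have := hZ'anti (Set.self_mem_Ici) (Set.mem_Ici.mpr (le_of_lt ht)) (le_of_lt ht)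
      linarith
  -- Z' t₀ < 0
  have hZ'0 : Z' t₀ < 0 := by
    have h1 : 0 < y t₀ ^ ((-5 : ℝ)/4) := Real.rpow_pos_of_pos (hpos t₀ le_rfl) _
    have : 0 < y t₀ ^ ((-5 : ℝ)/4) * deriv y t₀ := mul_pos h1 hy'0
    simp only [hZ']
    nlinarith
  -- pick T large
  have hz0 : 0 < z t₀ := Real.rpow_pos_of_pos (hpos t₀ le_rfl) _
  set T : ℝ := t₀ + (z t₀ + 1) / (-Z' t₀) with hT
  have hTpos : (z t₀ + 1) / (-Z' t₀) > 0 := by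
    apply div_pos (by linarith) (by linarith)
  have hTge : t₀ ≤ T := by rw [hT]; linarith
  have hle : w T ≤ w t₀ := hwanti Set.self_mem_Ici (Set.mem_Ici.mpr hTge) hTge
  have hzT : 0 < z T := Real.rpow_pos_of_pos (hpos T hTge) _
  have hne : Z' t₀ ≠ 0 := ne_of_lt hZ'0
  have hTT : Z' t₀ * (T - t₀) = -(z t₀ + 1) := by
    have h1 : T - t₀ = (z t₀ + 1) / -Z' t₀ := by rw [hT]; ring
    rw [h1, div_neg, mul_neg, ← mul_div_assoc, mul_div_cancel_left₀ _ hne]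
  simp only [hw] at hle
  nlinarith [hle, hTT]
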